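/- The 4×4 unitary matrix R_4 = (q/√2)·[[1,1,0,0],[-1,1,0,0],[0,0,1,-1],[0,0,1,1]] (q ∈ 𝕋) is a solution of the Yang-Baxter equation on ℂ²⊗ℂ², and its spectrum is {q(1+i)/√2, q(1-i)/√2}. -/

import Mathlib

open Matrix Kronecker Complex

/-- The algebra `M_d ⊗ M_d` realized as matrices indexed by pairs. -/
abbrev MM (d : ℕ) := Matrix (Fin d × Fin d) (Fin d × Fin d) ℂ

/-- `R ⊗ 1` acting on the triple tensor product `ℂ^d ⊗ ℂ^d ⊗ ℂ^d`. -/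
def amp1 {d : ℕ} (R : MM d) :
    Matrix (Fin d × Fin d × Fin d) (Fin d × Fin d × Fin d) ℂ :=
  Matrix.of fun x y => R (x.1, x.2.1) (y.1, y.2.1) * (if x.2.2 = y.2.2 then 1 else 0)

/-- `1 ⊗ R` acting on the triple tensor product `ℂ^d ⊗ ℂ^d ⊗ ℂ^d`. -/
def amp2 {d : ℕ} (R : MM d) :
    Matrix (Fin d × Fin d × Fin d) (Fin d × Fin d × Fin d) ℂ :=
  Matrix.of fun x y => (if x.1 = y.1 then 1 else 0) * R (x.2.1, x.2.2) (y.2.1, y.2.2)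

/-- The Yang-Baxter equation `(R⊗1)(1⊗R)(R⊗1) = (1⊗R)(R⊗1)(1⊗R)`. -/
def YBE {d : ℕ} (R : MM d) : Prop :=
  amp1 R * amp2 R * amp1 R = amp2 R * amp1 R * amp2 R

/-- The R-matrix `R₄ = (q/√2)·[[1,1,0,0],[-1,1,0,0],[0,0,1,-1],[0,0,1,1]]` on `ℂ²⊗ℂ²`,
in the lexicographic tensor basis `e₀⊗e₀, e₀⊗e₁, e₁⊗e₀, e₁⊗e₁`. -/
noncomputable def R4 (q : ℂ) : MM 2 :=
  (q / (Real.sqrt 2 : ℂ)) • Matrix.of fun p r =>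
    if p.1 = r.1 then
      (if p.1 = 0 then
        (if p.2 = 0 then 1 else if r.2 = 0 then -1 else 1)
      else
        (if p.2 = 0 then (if r.2 = 0 then 1 else -1) else 1))
    else 0

/-- Integer version of the matrix underlying `R4`. -/
def AZ : Matrix (Fin 2 × Fin 2) (Fin 2 × Fin 2) ℤ :=
  Matrix.of fun p r =>
    if p.1 = r.1 then
      (if p.1 = 0 then
        (if p.2 = 0 then 1 else if r.2 = 0 then -1 else 1)
      else
        (if p.2 = 0 then (if r.2 = 0 then 1 else -1) else 1))
    else 0

/-- Integer version of `amp1`. -/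
def amp1Z (R : Matrix (Fin 2 × Fin 2) (Fin 2 × Fin 2) ℤ) :
    Matrix (Fin 2 × Fin 2 × Fin 2) (Fin 2 × Fin 2 × Fin 2) ℤ :=
  Matrix.of fun x y => R (x.1, x.2.1) (y.1, y.2.1) * (if x.2.2 = y.2.2 then 1 else 0)

/-- Integer version of `amp2`. -/
def amp2Z (R : Matrix (Fin 2 × Fin 2) (Fin 2 × Fin 2) ℤ) :
    Matrix (Fin 2 × Fin 2 × Fin 2) (Fin 2 × Fin 2 × Fin 2) ℤ :=
  Matrix.of fun x y => (if x.1 = y.1 then 1 else 0) * R (x.2.1, x.2.2) (y.2.1, y.2.2)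

lemma hZ : amp1Z AZ * amp2Z AZ * amp1Z AZ = amp2Z AZ * amp1Z AZ * amp2Z AZ := by decide

lemma R4_eq (q : ℂ) :
    R4 q = (q / (Real.sqrt 2 : ℂ)) • (AZ.map (Int.castRingHom ℂ)) := by
  ext p r
  simp [R4, AZ, Matrix.map_apply, apply_ite (Int.castRingHom ℂ)]

lemma amp1_smul (c : ℂ) (M : MM 2) : amp1 (c • M) = c • amp1 M := by
  ext x y; simp [amp1, mul_assoc]

lemma amp2_smul (c : ℂ) (M : MM 2) : amp2 (c • M) = c • amp2 M := by
  ext x y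
  simp only [amp2, Matrix.of_apply, Matrix.smul_apply, smul_eq_mul]
  ring

lemma amp1_map (M : Matrix (Fin 2 × Fin 2) (Fin 2 × Fin 2) ℤ) :
    amp1 (M.map (Int.castRingHom ℂ)) = (amp1Z M).map (Int.castRingHom ℂ) := by
  ext x y
  simp [amp1, amp1Z, Matrix.map_apply, apply_ite (Int.castRingHom ℂ)]

lemma amp2_map (M : Matrix (Fin 2 × Fin 2) (Fin 2 × Fin 2) ℤ) :
    amp2 (M.map (Int.castRingHom ℂ)) = (amp2Z M).map (Int.castRingHom ℂ) := by
  ext x y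
  simp [amp2, amp2Z, Matrix.map_apply, apply_ite (Int.castRingHom ℂ)]

/-- An explicit block decomposition of the index set `Fin 2 × Fin 2`. -/
noncomputable def e4 : Fin 2 ⊕ Fin 2 ≃ Fin 2 × Fin 2 :=
  Equiv.ofBijective (Sum.elim ![(0,0),(0,1)] ![(1,0),(1,1)]) (by decide)

/-- For `q` on the unit circle, `R₄` is unitary, solves the Yang-Baxter equation, and its
spectrum is `{q(1+i)/√2, q(1-i)/√2}`. -/
theorem R4_unitary_YBE_spectrum (q : ℂ) (hq : ‖q‖ = 1) :
    R4 q ∈ Matrix.unitaryGroup (Fin 2 × Fin 2) ℂ ∧ YBE (R4 q) ∧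
      spectrum ℂ (R4 q) =
        {q * (1 + Complex.I) / (Real.sqrt 2 : ℂ), q * (1 - Complex.I) / (Real.sqrt 2 : ℂ)} := by
  have hs2 : ((Real.sqrt 2 : ℝ) : ℂ) ^ 2 = 2 := by
    rw [sq]; exact_mod_cast Real.mul_self_sqrt (by norm_num : (0:ℝ) ≤ 2)
  refine ⟨?_, ?_, ?_⟩
  · -- unitarity
    have hqq : q * (starRingEnd ℂ) q = 1 := by
      rw [Complex.mul_conj, Complex.normSq_eq_norm_sq, hq]
      norm_num
    rw [Matrix.mem_unitaryGroup_iff]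
    ext ⟨i, j⟩ ⟨k, l⟩
    simp only [Matrix.mul_apply, Fintype.sum_prod_type, Fin.sum_univ_two, R4,
      Matrix.smul_apply, Matrix.of_apply, Matrix.star_apply, star_smul, smul_eq_mul,
      Matrix.one_apply, map_div₀, Complex.conj_ofReal, RingHom.id_apply, starRingEnd_apply]
    fin_cases i <;> fin_cases j <;> fin_cases k <;> fin_cases l <;> (try simp) <;>
      (try field_simp) <;> (try ring_nf) <;>
      first
      | (rw [if_neg (by decide)])
      | (rw [hqq, hs2]; norm_num)
  · -- Yang-Baxter
    unfold YBE
    rw [R4_eq, amp1_smul, amp2_smul, amp1_map, amp2_map]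
    simp only [smul_mul_smul_comm, ← Matrix.map_mul]
    rw [hZ]
  · -- spectrum
    set s : ℂ := (Real.sqrt 2 : ℂ) with hs
    have hs0 : s ≠ 0 := by
      simp [hs, Complex.ofReal_ne_zero, Real.sqrt_eq_zero']
    set c : ℂ := q / s with hc
    have hdet : ∀ x : ℂ, (algebraMap ℂ (MM 2) x - R4 q).det
        = ((x - c * (1 + Complex.I)) * (x - c * (1 - Complex.I))) ^ 2 := by
      intro x
      rw [← Matrix.det_submatrix_equiv_self e4]
      have hsub : ((algebraMap ℂ (MM 2) x - R4 q).submatrix e4 e4)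
          = Matrix.fromBlocks !![x - c, -c; c, x - c] 0 0 !![x - c, c; -c, x - c] := by
        ext i j
        obtain i | i := i <;> obtain j | j := j <;> fin_cases i <;> fin_cases j <;>
          simp [e4, Equiv.ofBijective, R4, Matrix.algebraMap_matrix_apply, hc, Prod.ext_iff] <;>
          ring
      rw [hsub, Matrix.det_fromBlocks_zero₂₁, Matrix.det_fin_two_of, Matrix.det_fin_two_of]
      have hI4 : Complex.I ^ 4 = 1 := by
        rw [(by ring : Complex.I ^ 4 = (Complex.I ^ 2) ^ 2), Complex.I_sq]; norm_num
      ring_nf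
      simp only [hI4, Complex.I_sq]
      ring
    ext x
    have hv1 : q * (1 + Complex.I) / s = c * (1 + Complex.I) := by rw [hc]; ring
    have hv2 : q * (1 - Complex.I) / s = c * (1 - Complex.I) := by rw [hc]; ring
    rw [spectrum.mem_iff, Matrix.isUnit_iff_isUnit_det, isUnit_iff_ne_zero, not_not, hdet,
      pow_eq_zero_iff (two_ne_zero), mul_eq_zero, sub_eq_zero, sub_eq_zero]
    simp [hv1, hv2]
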